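/- If group a is u-disadvantaged, then every borrower from group a who receives a loan under the optimal unconstrained classifier also receives it (weakly more often) under an optimal u-WE classifier of the threshold form: for all x with P(x, a) > 0, c_unc*(x,a) ≤ c_WE*(x,a). -/

import Mathlib

/-- Probability of group {A = a}. -/
noncomputable def grpProb {X : Type*} [Fintype X] (P : X × Bool → ℝ) (a : Bool) : ℝ :=
  ∑ x : X, P (x, a)

/-- Group-a welfare of a classifier. -/
noncomputable def welfareG {X : Type*} [Fintype X]
    (P : X × Bool → ℝ) (ubar : X × Bool → ℝ) (c : X × Bool → ℝ) (a : Bool) : ℝ :=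
  (∑ x : X, P (x, a) * ubar (x, a) * c (x, a)) / grpProb P a

/-- Bank's revenue of a classifier. -/
noncomputable def revenue {X : Type*} [Fintype X]
    (P : X × Bool → ℝ) (r : X × Bool → ℝ) (c : X × Bool → ℝ) : ℝ :=
  ∑ z : X × Bool, P z * r z * c z

/-- Subgroup-optimal revenue R_a*(w). -/
noncomputable def RstarG {X : Type*} [Fintype X]
    (P : X × Bool → ℝ) (r ubar : X × Bool → ℝ) (a : Bool) (w : ℝ) : ℝ :=
  sSup {v : ℝ | ∃ c : X → ℝ, (∀ x, c x ∈ Set.Icc (0:ℝ) 1) ∧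
    (∑ x : X, (P (x, a) / grpProb P a) * ubar (x, a) * c x) = w ∧
    (∑ x : X, (P (x, a) / grpProb P a) * r (x, a) * c x) = v}

/-- Conditional expected utility E[u | A = a]. -/
noncomputable def condEu {X : Type*} [Fintype X]
    (P : X × Bool → ℝ) (ubar : X × Bool → ℝ) (a : Bool) : ℝ :=
  ∑ x : X, (P (x, a) / grpProb P a) * ubar (x, a)

/-- The optimal unconstrained (threshold) classifier: 1 iff r(x,a) > 0. -/
noncomputable def cUnc {X : Type*} (r : X × Bool → ℝ) : X × Bool → ℝ :=
  fun z => if 0 < r z then 1 else 0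

/-- if group a is u-disadvantaged, then under an optimal u-WE classifier
of threshold form (with λ_a a supergradient of R_a* at the optimal welfare level),
every borrower from group a granted a loan by the unconstrained classifier keeps it:
c_unc*(x,a) ≤ c_WE*(x,a) for all x with P(x,a) > 0. -/
theorem stmt13 {X : Type*} [Fintype X]
    (P : X × Bool → ℝ) (hP : ∀ z, 0 ≤ P z) (hPsum : ∑ z, P z = 1)
    (h0 : 0 < grpProb P false) (h1 : 0 < grpProb P true)
    (r ubar : X × Bool → ℝ) (hu : ∀ z, 0 ≤ ubar z)
    (cWE : X × Bool → ℝ) (hcWE : ∀ z, cWE z ∈ Set.Icc (0:ℝ) 1)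
    (hWE : welfareG P ubar cWE false = welfareG P ubar cWE true)
    (hopt : ∀ c : X × Bool → ℝ, (∀ z, c z ∈ Set.Icc (0:ℝ) 1) →
      welfareG P ubar c false = welfareG P ubar c true →
      revenue P r c ≤ revenue P r cWE)
    (a : Bool)
    (lam : ℝ)
    (hsup : ∀ w' ∈ Set.Icc (0:ℝ) (condEu P ubar a),
      RstarG P r ubar a w' ≤
        RstarG P r ubar a (welfareG P ubar cWE a) +
          lam * (w' - welfareG P ubar cWE a))
    (hthr : ∀ x : X,
      (lam * ubar (x, a) < r (x, a) → cWE (x, a) = 1) ∧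
      (r (x, a) < lam * ubar (x, a) → cWE (x, a) = 0))
    (hdis : welfareG P ubar (cUnc r) a < welfareG P ubar (cUnc r) (!a)) :
    ∀ x : X, 0 < P (x, a) → cUnc r (x, a) ≤ cWE (x, a) := by

  classical
  have hpa : ∀ b : Bool, 0 < grpProb P b := by intro b; cases b; exacts [h0, h1]
  have key : ∀ (q rz cz : ℝ), 0 ≤ q → 0 ≤ cz → cz ≤ 1 →
      q * rz * cz ≤ q * rz * (if 0 < rz then (1:ℝ) else 0) := by
    intro q rz cz hq hc0 hc1
    split_ifs with h
    · nlinarith [mul_nonneg (mul_nonneg hq h.le) (by linarith : (0:ℝ) ≤ 1 - cz)]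
    · push_neg at h
      nlinarith [mul_nonneg (mul_nonneg hq (by linarith : (0:ℝ) ≤ -rz)) hc0]
  have hcUicc : ∀ z, cUnc r z ∈ Set.Icc (0:ℝ) 1 := by
    intro z; unfold cUnc; split_ifs <;> norm_num
  intro x₀ hPx
  rcases le_or_gt (r (x₀, a)) 0 with hr | hr
  · simp only [cUnc, if_neg (not_lt.2 hr)]
    exact (hcWE (x₀, a)).1
  rcases lt_or_ge (lam * ubar (x₀, a)) (r (x₀, a)) with hlt | hlt
  · rw [(hthr x₀).1 hlt]
    exact (hcUicc (x₀, a)).2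
  have hlu : 0 < lam * ubar (x₀, a) := lt_of_lt_of_le hr hlt
  have hub : 0 < ubar (x₀, a) := by
    rcases (hu (x₀, a)).lt_or_eq with h | h
    · exact h
    · exfalso; rw [← h] at hlu; simp at hlu
  have hlam : 0 < lam := by nlinarith
  rcases le_or_gt 1 (cWE (x₀, a)) with hc1 | hc1
  · simp only [cUnc, if_pos hr]; exact hc1
  exfalso
  -- welfare sums rewritten with normalized weights
  have hwel : ∀ (c : X × Bool → ℝ) (b : Bool),
      (∑ x : X, (P (x, b) / grpProb P b) * ubar (x, b) * c (x, b)) = welfareG P ubar c b := by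
    intro c b
    unfold welfareG
    rw [Finset.sum_div]
    exact Finset.sum_congr rfl fun x _ => by ring
  -- the bound M
  have hbound : ∀ (w v : ℝ), (∃ c : X → ℝ, (∀ x, c x ∈ Set.Icc (0:ℝ) 1) ∧
      (∑ x : X, (P (x, a) / grpProb P a) * ubar (x, a) * c x) = w ∧
      (∑ x : X, (P (x, a) / grpProb P a) * r (x, a) * c x) = v) →
      v ≤ ∑ x : X, (P (x, a) / grpProb P a) * r (x, a) * cUnc r (x, a) := by
    rintro w v ⟨c, hc, -, rfl⟩
    apply Finset.sum_le_sum
    intro x _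
    have h := key (P (x, a) / grpProb P a) (r (x, a)) (c x)
      (div_nonneg (hP _) (hpa a).le) (hc x).1 (hc x).2
    simpa [cUnc] using h
  have hmemWE : (∑ x : X, (P (x, a) / grpProb P a) * r (x, a) * cWE (x, a)) ∈
      {v : ℝ | ∃ c : X → ℝ, (∀ x, c x ∈ Set.Icc (0:ℝ) 1) ∧
        (∑ x : X, (P (x, a) / grpProb P a) * ubar (x, a) * c x) = welfareG P ubar cWE a ∧
        (∑ x : X, (P (x, a) / grpProb P a) * r (x, a) * c x) = v} :=
    ⟨fun x => cWE (x, a), fun x => hcWE (x, a), hwel cWE a, rfl⟩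
  have hmemU : (∑ x : X, (P (x, a) / grpProb P a) * r (x, a) * cUnc r (x, a)) ∈
      {v : ℝ | ∃ c : X → ℝ, (∀ x, c x ∈ Set.Icc (0:ℝ) 1) ∧
        (∑ x : X, (P (x, a) / grpProb P a) * ubar (x, a) * c x) = welfareG P ubar (cUnc r) a ∧
        (∑ x : X, (P (x, a) / grpProb P a) * r (x, a) * c x) = v} :=
    ⟨fun x => cUnc r (x, a), fun x => hcUicc (x, a), hwel (cUnc r) a, rfl⟩
  have hR1 : RstarG P r ubar a (welfareG P ubar cWE a) ≤
      ∑ x : X, (P (x, a) / grpProb P a) * r (x, a) * cUnc r (x, a) := by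
    unfold RstarG
    exact csSup_le ⟨_, hmemWE⟩ (fun v hv => hbound _ v hv)
  have hR2 : (∑ x : X, (P (x, a) / grpProb P a) * r (x, a) * cUnc r (x, a)) ≤
      RstarG P r ubar a (welfareG P ubar (cUnc r) a) := by
    unfold RstarG
    exact le_csSup ⟨_, fun v hv => hbound _ v hv⟩ hmemU
  have hwu0 : 0 ≤ welfareG P ubar (cUnc r) a := by
    unfold welfareG
    apply div_nonneg _ (hpa a).le
    apply Finset.sum_nonneg
    intro x _
    exact mul_nonneg (mul_nonneg (hP _) (hu _)) (hcUicc (x, a)).1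
  have hwuc : welfareG P ubar (cUnc r) a ≤ condEu P ubar a := by
    rw [← hwel (cUnc r) a]
    unfold condEu
    apply Finset.sum_le_sum
    intro x _
    have h2 : 0 ≤ P (x, a) / grpProb P a * ubar (x, a) :=
      mul_nonneg (div_nonneg (hP _) (hpa a).le) (hu _)
    exact mul_le_of_le_one_right h2 (hcUicc (x, a)).2
  have hsw := hsup (welfareG P ubar (cUnc r) a) ⟨hwu0, hwuc⟩
  have hge : 0 ≤ lam * (welfareG P ubar (cUnc r) a - welfareG P ubar cWE a) := by linarith
  have hwle : welfareG P ubar cWE a ≤ welfareG P ubar (cUnc r) a := by nlinarith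
  -- construction of a strictly better classifier
  obtain ⟨D, hDd⟩ : ∃ D : ℝ, D = welfareG P ubar (cUnc r) (!a) - welfareG P ubar cWE a := ⟨_, rfl⟩
  have hD : 0 < D := by rw [hDd]; linarith
  obtain ⟨q, hqd⟩ : ∃ q : ℝ, q = P (x₀, a) * ubar (x₀, a) / grpProb P a := ⟨_, rfl⟩
  have hq0 : 0 < q := by rw [hqd]; exact div_pos (mul_pos hPx hub) (hpa a)
  obtain ⟨s, hsd⟩ : ∃ s : ℝ, s = min (1 - cWE (x₀, a)) (D / q) := ⟨_, rfl⟩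
  have hs0 : 0 < s := by rw [hsd]; exact lt_min (by linarith) (div_pos hD hq0)
  have hs1 : cWE (x₀, a) + s ≤ 1 := by
    have := hsd ▸ (min_le_left (1 - cWE (x₀, a)) (D / q))
    linarith
  obtain ⟨t, htd⟩ : ∃ t : ℝ, t = s * q / D := ⟨_, rfl⟩
  have ht0 : 0 < t := by rw [htd]; exact div_pos (mul_pos hs0 hq0) hD
  have ht1 : t ≤ 1 := by
    rw [htd, div_le_one hD]
    have hsq : s ≤ D / q := hsd ▸ (min_le_right (1 - cWE (x₀, a)) (D / q))
    calc s * q ≤ D / q * q := mul_le_mul_of_nonneg_right hsq hq0.le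
      _ = D := div_mul_cancel₀ D hq0.ne'
  have htD : t * D = s * q := by rw [htd]; field_simp
  obtain ⟨c', hc'⟩ : ∃ c' : X × Bool → ℝ, c' = fun z =>
      if z.2 = a then cWE z + (if z.1 = x₀ then s else 0)
      else (1 - t) * cWE z + t * cUnc r z := ⟨_, rfl⟩
  have hca : ∀ x : X, c' (x, a) = cWE (x, a) + (if x = x₀ then s else 0) := by
    intro x; simp only [hc']; simp
  have hcb : ∀ x : X, c' (x, !a) = (1 - t) * cWE (x, !a) + t * cUnc r (x, !a) := by
    intro x; simp only [hc']; simp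
  have hc'icc : ∀ z, c' z ∈ Set.Icc (0:ℝ) 1 := by
    intro z
    rcases hcWE z with ⟨h0', h1'⟩
    rcases hcUicc z with ⟨h0u, h1u⟩
    simp only [hc', Set.mem_Icc]
    by_cases h : z.2 = a
    · rw [if_pos h]
      by_cases hx : z.1 = x₀
      · rw [if_pos hx]
        have hz : z = (x₀, a) := Prod.ext_iff.mpr ⟨hx, h⟩
        subst hz
        exact ⟨by linarith, by linarith⟩
      · rw [if_neg hx, add_zero]
        exact ⟨h0', h1'⟩
    · rw [if_neg h]
      constructor
      · have hA : 0 ≤ (1 - t) * cWE z := mul_nonneg (by linarith) h0'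
        have hB : 0 ≤ t * cUnc r z := mul_nonneg ht0.le h0u
        linarith
      · nlinarith
  have hnum_a : ∑ x : X, P (x, a) * ubar (x, a) * c' (x, a)
      = (∑ x : X, P (x, a) * ubar (x, a) * cWE (x, a)) + P (x₀, a) * ubar (x₀, a) * s := by
    have hterm : ∀ x : X, P (x, a) * ubar (x, a) * c' (x, a)
        = P (x, a) * ubar (x, a) * cWE (x, a)
          + (if x = x₀ then P (x, a) * ubar (x, a) * s else 0) := by
      intro x; rw [hca x]; split_ifs <;> ring
    calc ∑ x : X, P (x, a) * ubar (x, a) * c' (x, a)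
        = ∑ x : X, (P (x, a) * ubar (x, a) * cWE (x, a)
            + (if x = x₀ then P (x, a) * ubar (x, a) * s else 0)) :=
          Finset.sum_congr rfl fun x _ => hterm x
      _ = (∑ x : X, P (x, a) * ubar (x, a) * cWE (x, a)) + P (x₀, a) * ubar (x₀, a) * s := by
          rw [Finset.sum_add_distrib,
            Finset.sum_ite_eq' Finset.univ x₀ (fun x => P (x, a) * ubar (x, a) * s),
            if_pos (Finset.mem_univ x₀)]
  have hnum_b : ∑ x : X, P (x, !a) * ubar (x, !a) * c' (x, !a)
      = (1 - t) * (∑ x : X, P (x, !a) * ubar (x, !a) * cWE (x, !a))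
        + t * (∑ x : X, P (x, !a) * ubar (x, !a) * cUnc r (x, !a)) := by
    rw [Finset.mul_sum, Finset.mul_sum, ← Finset.sum_add_distrib]
    exact Finset.sum_congr rfl fun x _ => by rw [hcb x]; ring
  have hwa : welfareG P ubar c' a
      = welfareG P ubar cWE a + P (x₀, a) * ubar (x₀, a) * s / grpProb P a := by
    unfold welfareG
    rw [hnum_a, add_div]
  have hwb : welfareG P ubar c' (!a)
      = (1 - t) * welfareG P ubar cWE (!a) + t * welfareG P ubar (cUnc r) (!a) := by
    unfold welfareG
    rw [hnum_b, add_div, mul_div_assoc, mul_div_assoc]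
  have hwstar' : welfareG P ubar cWE (!a) = welfareG P ubar cWE a := by
    cases a
    · exact hWE.symm
    · exact hWE
  have heq : welfareG P ubar c' a = welfareG P ubar c' (!a) := by
    rw [hwa, hwb, hwstar']
    have h1 : t * D = s * q := htD
    rw [hDd, hqd] at h1
    linear_combination -h1
  have hWEc' : welfareG P ubar c' false = welfareG P ubar c' true := by
    cases a
    · simpa using heq
    · simpa using heq.symm
  have hle : ∀ z ∈ (Finset.univ : Finset (X × Bool)),
      P z * r z * cWE z ≤ P z * r z * c' z := by
    intro z _
    simp only [hc']
    by_cases hz : z.2 = a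
    · rw [if_pos hz]
      by_cases hx : z.1 = x₀
      · rw [if_pos hx]
        have hz' : z = (x₀, a) := Prod.ext_iff.mpr ⟨hx, hz⟩
        subst hz'
        exact mul_le_mul_of_nonneg_left (by linarith) (mul_pos hPx hr).le
      · rw [if_neg hx, add_zero]
    · rw [if_neg hz]
      have hkey := key (P z) (r z) (cWE z) (hP z) (hcWE z).1 (hcWE z).2
      have hK : P z * r z * cWE z ≤ P z * r z * cUnc r z := by simpa [cUnc] using hkey
      calc P z * r z * cWE z
          = (1 - t) * (P z * r z * cWE z) + t * (P z * r z * cWE z) := by ring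
        _ ≤ (1 - t) * (P z * r z * cWE z) + t * (P z * r z * cUnc r z) :=
            add_le_add_right (mul_le_mul_of_nonneg_left hK ht0.le) _
        _ = P z * r z * ((1 - t) * cWE z + t * cUnc r z) := by ring
  have hstrict : P (x₀, a) * r (x₀, a) * cWE (x₀, a) < P (x₀, a) * r (x₀, a) * c' (x₀, a) := by
    rw [hca x₀, if_pos rfl]
    exact mul_lt_mul_of_pos_left (by linarith) (mul_pos hPx hr)
  have hrevlt : revenue P r cWE < revenue P r c' := by
    unfold revenue
    exact Finset.sum_lt_sum hle ⟨(x₀, a), Finset.mem_univ _, hstrict⟩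
  have := hopt c' hc'icc hWEc'
  linarith
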